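/- Let f, ψ : ℝⁿ → ℝ with f differentiable satisfying |f(x+Ud) − f(x) − ⟨Uᵀ∇f(x), d⟩| ≤ (L_U/2)‖d‖² for all d (descent-type bound along U ∈ ℝ^{n×p}), and let ψ be such that d ↦ ψ(x + Ud) is convex. Let H > L_U/2 and let d* minimize d ↦ f(x) + ⟨Uᵀ∇f(x), d⟩ + (H/2)‖d‖² + ψ(x + Ud) over ℝᵖ. Then F(x + Ud*) ≤ F(x) − (H − L_U/2)‖d*‖², where F = f + ψ. -/

import Mathlib

open Matrix

noncomputable def sketch {n p : ℕ} (U : Matrix (Fin n) (Fin p) ℝ) :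
    EuclideanSpace ℝ (Fin p) →L[ℝ] EuclideanSpace ℝ (Fin n) :=
  LinearMap.toContinuousLinearMap (Matrix.toEuclideanLin U)

theorem stmt_12 {n p : ℕ} (f ψ : EuclideanSpace ℝ (Fin n) → ℝ) (hf : Differentiable ℝ f)
    (U : Matrix (Fin n) (Fin p) ℝ) (x : EuclideanSpace ℝ (Fin n)) (L H : ℝ)
    (hquad : ∀ d : EuclideanSpace ℝ (Fin p),
      |f (x + sketch U d) - f x - inner ℝ (sketch Uᵀ (gradient f x)) d| ≤ L / 2 * ‖d‖ ^ 2)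
    (hψconv : ConvexOn ℝ Set.univ (fun d : EuclideanSpace ℝ (Fin p) => ψ (x + sketch U d)))
    (hH : L / 2 < H) (dstar : EuclideanSpace ℝ (Fin p))
    (hmin : ∀ d : EuclideanSpace ℝ (Fin p),
      f x + inner ℝ (sketch Uᵀ (gradient f x)) dstar + H / 2 * ‖dstar‖ ^ 2 + ψ (x + sketch U dstar)
        ≤ f x + inner ℝ (sketch Uᵀ (gradient f x)) d + H / 2 * ‖d‖ ^ 2 + ψ (x + sketch U d)) :
    f (x + sketch U dstar) + ψ (x + sketch U dstar)
      ≤ f x + ψ x - (H - L / 2) * ‖dstar‖ ^ 2 := by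
  by_cases hd0 : dstar = 0
  · subst hd0
    simp only [map_zero, add_zero, norm_zero]
    have := hquad 0
    simp only [map_zero, add_zero, norm_zero, inner_zero_right] at this
    nlinarith [abs_nonneg (f (x + 0) - f x - (0:ℝ))]
  -- notation
  set g : EuclideanSpace ℝ (Fin p) := sketch Uᵀ (gradient f x) with hg
  set φ : EuclideanSpace ℝ (Fin p) → ℝ := fun d => ψ (x + sketch U d) with hφ
  have hφ0 : φ 0 = ψ x := by simp [hφ]
  set A : ℝ := inner ℝ g dstar + φ dstar - φ 0 with hA
  have hdpos : 0 < ‖dstar‖ ^ 2 := pow_pos (norm_pos_iff.mpr hd0) 2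
  have hLnn : 0 ≤ L := by
    have h := hquad dstar
    have h0 : (0:ℝ) ≤ L / 2 * ‖dstar‖ ^ 2 := le_trans (abs_nonneg _) h
    nlinarith
  have hHpos : 0 < H := by linarith
  -- key inequality for all t ∈ (0,1)
  have key : ∀ t : ℝ, 0 < t → t < 1 → A ≤ -(H / 2) * (1 + t) * ‖dstar‖ ^ 2 := by
    intro t ht0 ht1
    have h1 := hmin (t • dstar)
    have hinner : (inner ℝ g (t • dstar) : ℝ) = t * inner ℝ g dstar := real_inner_smul_right g dstar t
    have hnorm : ‖t • dstar‖ ^ 2 = t ^ 2 * ‖dstar‖ ^ 2 := by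
      rw [norm_smul, Real.norm_eq_abs, abs_of_pos ht0]; ring
    have hconv : φ (t • dstar) ≤ t * φ dstar + (1 - t) * φ 0 := by
      have := hψconv.2 (Set.mem_univ dstar) (Set.mem_univ 0) (le_of_lt ht0)
        (by linarith : (0:ℝ) ≤ 1 - t) (by ring)
      simpa [smul_eq_mul, smul_zero] using this
    rw [hinner, hnorm] at h1
    have h4 : (1 - t) * (A + (H / 2) * (1 + t) * ‖dstar‖ ^ 2) ≤ (1 - t) * 0 := by
      nlinarith [h1, hconv]
    have h5 := le_of_mul_le_mul_left h4 (by linarith : (0:ℝ) < 1 - t)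
    linarith
  -- limit t → 1
  have hAle : A ≤ -H * ‖dstar‖ ^ 2 := by
    by_contra hcon
    push_neg at hcon
    set ε : ℝ := A + H * ‖dstar‖ ^ 2 with hε
    have hεpos : 0 < ε := by linarith
    have hden : 0 < H * ‖dstar‖ ^ 2 := by positivity
    set δ : ℝ := min (ε / (H * ‖dstar‖ ^ 2)) (1 / 2) with hδ
    have hδpos : 0 < δ := lt_min (div_pos hεpos hden) (by norm_num)
    have hδle : δ ≤ ε / (H * ‖dstar‖ ^ 2) := min_le_left _ _
    have hδhalf : δ ≤ 1 / 2 := min_le_right _ _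
    have hk := key (1 - δ) (by linarith) (by linarith)
    have hmul : δ * (H * ‖dstar‖ ^ 2) ≤ ε := by
      rw [← div_mul_cancel₀ ε (ne_of_gt hden)]
      exact mul_le_mul_of_nonneg_right hδle (le_of_lt hden)
    nlinarith [hk, hmul]
  -- combine with quadratic upper bound
  have hq := hquad dstar
  have habs := (abs_le.mp hq).2
  have : f (x + sketch U dstar) ≤ f x + inner ℝ g dstar + L / 2 * ‖dstar‖ ^ 2 := by linarith
  have hφd : ψ (x + sketch U dstar) = φ dstar := rfl
  rw [hφd]
  have : f (x + sketch U dstar) + φ dstar ≤ f x + A + φ 0 + L / 2 * ‖dstar‖ ^ 2 := by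
    rw [hA]; linarith
  rw [hφ0] at this
  nlinarith [hAle]
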